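/- arXiv:1306.2185 — 2 statements merged into one kernel-verified Lean document; each statement's English description precedes it below -/
import Mathlib

section
/- Let 𝔸 be a unital real Banach algebra and f_1,…,f_d ∈ 𝔸 invertible elements with f_l² = −r_l²·1 for reals r_l > 0. For each l let g_l : 𝔸 → 𝔸 be one of the following four functions: g_l(x) = exp(x), g_l(x) = cos(r_l)·1, g_l(x) = (sin(r_l)/r_l)·x, or g_l(x) = 0. Then for every A ∈ 𝔸: (∏_{l=1}^{d} g_l(−f_l)) · A = Σ_{j∈{0,1}^d} A_{c^j(←F)} · ∏_{l=1}^{d} g_l(−(−1)^{j_l} f_l), where F = (f_1,…,f_d) and all products over l are taken in increasing order of l. -/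
noncomputable section

variable {𝔸 : Type*}

/-- The commutative (`s = 0`) and anticommutative (`s = 1`) part of `A` with respect to an
invertible element `B`: `A_{c^s(B)} = ½(A + (−1)^s B⁻¹AB)`. -/
def cPart [Ring 𝔸] [Algebra ℝ 𝔸] (B : 𝔸) (s : Fin 2) (A : 𝔸) : 𝔸 :=
  (2 : ℝ)⁻¹ • (A + (-1 : 𝔸) ^ (s : ℕ) * (Ring.inverse B * A * B))

/-- The backward iterated decomposition `A_{c^j(←B)}`, applying the last list entry first. -/
def cBwd [Ring 𝔸] [Algebra ℝ 𝔸] (L : List (𝔸 × Fin 2)) (A : 𝔸) : 𝔸 :=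
  L.foldr (fun p acc => cPart p.1 p.2 acc) A

open NormedSpace in
lemma semiconj_exp [NormedRing 𝔸] [NormedAlgebra ℝ 𝔸] [CompleteSpace 𝔸]
    {a b c : 𝔸} (h : SemiconjBy a b c) :
    a * exp b = exp c * a := by
  simp only [exp_eq_tsum ℝ]
  rw [← (expSeries_summable' (𝕂 := ℝ) b).tsum_mul_left a,
    ← (expSeries_summable' (𝕂 := ℝ) c).tsum_mul_right a]
  refine tsum_congr fun n => ?_
  rw [mul_smul_comm, smul_mul_assoc, (h.pow_right n).eq]

lemma cPart_zero_add_one [Ring 𝔸] [Algebra ℝ 𝔸] (B A : 𝔸) :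
    cPart B 0 A + cPart B 1 A = A := by
  simp only [cPart, Fin.val_zero, Fin.val_one, pow_zero, pow_one, one_mul, neg_one_mul]
  module

section ring
variable [Ring 𝔸] [Algebra ℝ 𝔸]

lemma hBinv {B : 𝔸} {c : ℝ} (hU : IsUnit B) (hB : B ^ 2 = c • 1) :
    B = c • Ring.inverse B := by
  calc B = B ^ 2 * Ring.inverse B := by
        rw [sq, mul_assoc, Ring.mul_inverse_cancel B hU, mul_one]
    _ = c • Ring.inverse B := by rw [hB, smul_mul_assoc, one_mul]

lemma e1_lem {B : 𝔸} (hU : IsUnit B) (A : 𝔸) :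
    B * (Ring.inverse B * A * B) = A * B := by
  rw [← mul_assoc, ← mul_assoc, Ring.mul_inverse_cancel B hU, one_mul]

lemma e2_lem {B : 𝔸} {c : ℝ} (hU : IsUnit B) (hB : B ^ 2 = c • 1) (A : 𝔸) :
    Ring.inverse B * A * B * B = B * A := by
  rw [mul_assoc (Ring.inverse B * A) B B, ← sq, hB, mul_smul_comm, mul_one, ← smul_mul_assoc,
    ← hBinv hU hB]

lemma commC {B : 𝔸} {c : ℝ} (hU : IsUnit B) (hB : B ^ 2 = c • 1) (A : 𝔸) :
    Commute B (cPart B 0 A) := by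
  show B * cPart B 0 A = cPart B 0 A * B
  simp only [cPart, Fin.val_zero, pow_zero, one_mul, mul_smul_comm, smul_mul_assoc]
  rw [mul_add, add_mul, e1_lem hU, e2_lem hU hB, add_comm]

lemma semiD {B : 𝔸} {c : ℝ} (hU : IsUnit B) (hB : B ^ 2 = c • 1) (A : 𝔸) :
    SemiconjBy (cPart B 1 A) B (-B) := by
  show cPart B 1 A * B = -B * cPart B 1 A
  simp only [cPart, Fin.val_one, pow_one, neg_one_mul, one_mul, mul_smul_comm, smul_mul_assoc, neg_mul]
  congr 1
  rw [add_mul, neg_mul, e2_lem hU hB, mul_add, mul_neg, e1_lem hU]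
  abel

end ring

open NormedSpace in
lemma key_step [NormedRing 𝔸] [NormedAlgebra ℝ 𝔸] [CompleteSpace 𝔸]
    {B : 𝔸} {r : ℝ} (hU : IsUnit B) (hB : B ^ 2 = -(r ^ 2) • (1 : 𝔸))
    (g : 𝔸 → 𝔸)
    (hg : g = exp ∨ g = (fun _ => Real.cos r • (1 : 𝔸)) ∨
          g = (fun x => (Real.sin r / r) • x) ∨ g = (fun _ => (0 : 𝔸)))
    (A : 𝔸) :
    g (-B) * A = cPart B 0 A * g (-B) + cPart B 1 A * g B := by
  have hC : Commute B (cPart B 0 A) := commC hU hB A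
  have hD : SemiconjBy (cPart B 1 A) B (-B) := semiD hU hB A
  have hCD := cPart_zero_add_one B A
  rcases hg with h | h | h | h <;> subst h
  · conv_lhs => rw [← hCD, mul_add]
    rw [((hC.neg_left).exp_left).eq, (semiconj_exp hD).symm]
  · simp only [smul_mul_assoc, one_mul, mul_smul_comm, mul_one, ← smul_add, hCD]
  · simp only [smul_mul_assoc, mul_smul_comm]
    rw [← smul_add]
    congr 1
    rw [mul_neg, ← hC.eq, hD.eq, neg_mul, neg_mul, ← neg_add, ← mul_add, hCD, ← neg_mul]
  · simp


/-- A product of "trigonometric" partial exponentials `g_l(−f_l)` — each `g_l` being `exp`, the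
constant `cos(r_l)·1`, `x ↦ (sin(r_l)/r_l)·x`, or `0` — can be moved past a multivector `A` at
the cost of sign flips on the decomposed parts. -/
theorem prod_gtt_mul_eq_sum_cBwd [NormedRing 𝔸] [NormedAlgebra ℝ 𝔸] [CompleteSpace 𝔸]
    {d : ℕ} (f : Fin d → 𝔸) (r : Fin d → ℝ) (hr : ∀ l, 0 < r l)
    (hU : ∀ l, IsUnit (f l)) (hf : ∀ l, f l ^ 2 = -(r l ^ 2) • (1 : 𝔸))
    (g : Fin d → 𝔸 → 𝔸)
    (hg : ∀ l, g l = NormedSpace.exp ∨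
               g l = (fun _ => Real.cos (r l) • (1 : 𝔸)) ∨
               g l = (fun x => (Real.sin (r l) / r l) • x) ∨
               g l = (fun _ => (0 : 𝔸)))
    (A : 𝔸) :
    ((List.ofFn (fun l => g l (-(f l)))).prod) * A =
      ∑ j : Fin d → Fin 2,
        cBwd (List.ofFn (fun l => (f l, j l))) A *
          ((List.ofFn (fun l => g l (-((-1 : ℝ) ^ ((j l : ℕ)) • f l)))).prod) := by

  induction d with
  | zero => simp [cBwd]
  | succ n ih =>
    have IH := ih (fun i => f i.succ) (fun i => r i.succ) (fun i => hr i.succ)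
      (fun i => hU i.succ) (fun i => hf i.succ) (fun i => g i.succ) (fun i => hg i.succ)
    -- rewrite RHS as a double sum
    rw [← Fintype.sum_equiv (Fin.consEquiv (fun _ : Fin (n + 1) => Fin 2))
      (fun p => cBwd (List.ofFn (fun l => (f l, (Fin.cons p.1 p.2 : Fin (n+1) → Fin 2) l))) A *
        ((List.ofFn (fun l => g l (-((-1 : ℝ) ^ ((((Fin.cons p.1 p.2 : Fin (n+1) → Fin 2)) l : ℕ)) • f l)))).prod))
      _ (fun p => by rfl)]
    rw [Fintype.sum_prod_type, Fin.sum_univ_two]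
    simp only [List.ofFn_succ, List.prod_cons, Fin.cons_zero, Fin.cons_succ]
    rw [mul_assoc, IH, Finset.mul_sum]
    rw [← Finset.sum_add_distrib]
    refine Finset.sum_congr rfl fun j' _ => ?_
    rw [← mul_assoc,
      key_step (hU 0) (hf 0) (g 0) (hg 0) (cBwd (List.ofFn fun i => (f i.succ, j' i)) A),
      add_mul, mul_assoc, mul_assoc]
    show cPart (f 0) 0 _ * _ + cPart (f 0) 1 _ * _ =
      cBwd ((f 0, (0 : Fin 2)) :: _) A * _ + cBwd ((f 0, (1 : Fin 2)) :: _) A * _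
    simp only [cBwd, List.foldr_cons]
    norm_num
end
end

section
/- Let 𝔸 be a unital real Banach algebra and i_1,…,i_d ∈ 𝔸 with i_l² = −1 for every l. For reals ρ_1,…,ρ_d and σ_1,…,σ_d set a_l = ρ_l·i_l and b_l = σ_l·i_l (so a_l and b_l are colinear, hence commute). Then the product of exponentials of sums splits as follows: ∏_{l=1}^{d} exp(−(a_l+b_l)) = Σ_{j∈{0,1}^d} Σ_{J} (∏_{l=1}^{d} [exp(−a_l)]_{c^{(J)_l}(←(i_1,…,i_{l−1}))}) · (∏_{l=1}^{d} exp(−(−1)^{j_l} b_l)), where J runs over the strictly lower triangular matrices in {0,1}^{d×d} whose rows sum componentwise mod 2 to j, and (J)_l denotes the first l−1 entries of the l-th row of J; alternatively, with J running over strictly upper triangular matrices with the same row-sum condition, ∏_{l=1}^{d} exp(−(a_l+b_l)) = Σ_{j∈{0,1}^d} Σ_{J} (∏_{l=1}^{d} exp(−(−1)^{j_l} a_l)) · (∏_{l=1}^{d} [exp(−b_l)]_{c^{(J)_l}(→(i_{l+1},…,i_d))}), where now (J)_l denotes the entries l+1,…,d of the l-th row. All products over l are taken in increasing order of l. -/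
noncomputable section

variable {𝔸 : Type*}

/-- The forward iterated decomposition `A_{c^m(→B)}`, applying the first list entry first. -/
def cFwd [Ring 𝔸] [Algebra ℝ 𝔸] (L : List (𝔸 × Fin 2)) (A : 𝔸) : 𝔸 :=
  L.foldl (fun acc p => cPart p.1 p.2 acc) A

/-- The ordered product `g 0 * g 1 * ⋯ * g (d−1)`, factors in increasing order of the index. -/
def oprod [Monoid 𝔸] {d : ℕ} (g : Fin d → 𝔸) : 𝔸 :=
  (List.ofFn g).prod

section Aux
set_option linter.unusedSectionVars false
variable [NormedRing 𝔸] [NormedAlgebra ℝ 𝔸] [CompleteSpace 𝔸]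

variable [NormedRing 𝔸] [NormedAlgebra ℝ 𝔸] [CompleteSpace 𝔸]

lemma myinv {i : 𝔸} (hi : i ^ 2 = -1) : Ring.inverse i = -i := by
  have h1 : i * -i = 1 := by rw [mul_neg, ← sq, hi, neg_neg]
  have h2 : -i * i = 1 := by rw [neg_mul, ← sq, hi, neg_neg]
  exact Ring.inverse_unit ⟨i, -i, h1, h2⟩

lemma cPart_add_cPart (B A : 𝔸) :
    cPart B 0 A + cPart B 1 A = A := by
  unfold cPart
  simp only [Fin.val_zero, pow_zero, Fin.val_one, pow_one, one_mul, neg_one_mul]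
  rw [← smul_add]
  have : (A + Ring.inverse B * A * B) + (A + -(Ring.inverse B * A * B)) = (2:ℝ) • A := by
    rw [two_smul]; abel
  rw [this, smul_smul]; norm_num

lemma cPart_semiconj {i : 𝔸} (hi : i ^ 2 = -1) (s : Fin 2) (A : 𝔸) :
    i * cPart i s A = cPart i s A * ((-1 : 𝔸) ^ (s : ℕ) * i) := by
  have h2 : i * i = -1 := by rw [← sq, hi]
  have e1 : i * (-i * A * i) = A * i := by
    calc i * (-i * A * i) = -((i * i) * (A * i)) := by noncomm_ring
    _ = A * i := by rw [h2]; simp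
  have e2 : (-i * A * i) * i = i * A := by
    calc (-i * A * i) * i = -((i * A) * (i * i)) := by noncomm_ring
    _ = i * A := by rw [h2, mul_neg, mul_one, neg_neg]
  fin_cases s <;>
    simp only [cPart, myinv hi, Fin.val_zero, pow_zero, Fin.val_one, pow_one, one_mul,
      neg_one_mul, mul_smul_comm, smul_mul_assoc] <;> congr 1
  · rw [mul_add, add_mul, e1, e2, add_comm]
  · rw [mul_add, add_mul, mul_neg, e1, mul_neg, neg_mul, mul_neg, neg_neg, e2, add_comm]

lemma exp_semiconj {a b x : 𝔸} (h : a * x = x * b) :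
    NormedSpace.exp a * x = x * NormedSpace.exp b := by
  have hn : ∀ n : ℕ, a ^ n * x = x * b ^ n := by
    intro n
    induction n with
    | zero => simp
    | succ n ih => rw [pow_succ, pow_succ, mul_assoc, h, ← mul_assoc, ih, mul_assoc]
  simp only [NormedSpace.exp_eq_tsum ℝ]
  rw [
    ← (NormedSpace.expSeries_summable' (𝕂 := ℝ) a).tsum_mul_right x,
    ← (NormedSpace.expSeries_summable' (𝕂 := ℝ) b).tsum_mul_left x]
  congr 1
  ext n
  rw [smul_mul_assoc, mul_smul_comm, hn]

-- step lemma
lemma exp_step {i : 𝔸} (hi : i ^ 2 = -1) (σ : ℝ) (X : 𝔸) (s : Fin 2) :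
    NormedSpace.exp (-(σ • i)) * cPart i s X
      = cPart i s X * NormedSpace.exp (-((-1 : ℝ) ^ (s : ℕ) • (σ • i))) := by
  apply exp_semiconj
  have := cPart_semiconj hi s X
  calc -(σ • i) * cPart i s X = -(σ • (i * cPart i s X)) := by
        rw [neg_mul, smul_mul_assoc]
    _ = -(σ • (cPart i s X * ((-1 : 𝔸) ^ (s : ℕ) * i))) := by rw [this]
    _ = cPart i s X * -((-1 : ℝ) ^ (s : ℕ) • (σ • i)) := by
        fin_cases s <;> simp [mul_smul_comm, mul_neg, smul_smul]




lemma cFwd_cons (p : 𝔸 × Fin 2) (L : List (𝔸 × Fin 2)) (A : 𝔸) :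
    cFwd (p :: L) A = cFwd L (cPart p.1 p.2 A) := rfl

lemma cBwd_concat (p : 𝔸 × Fin 2) (L : List (𝔸 × Fin 2)) (A : 𝔸) :
    cBwd (L ++ [p]) A = cBwd L (cPart p.1 p.2 A) := by
  simp [cBwd, List.foldr_append]

lemma oprod_succ_last {n : ℕ} (g : Fin (n + 1) → 𝔸) :
    oprod g = oprod (fun k : Fin n => g k.castSucc) * g (Fin.last n) := by
  rw [oprod, List.ofFn_succ', oprod, List.concat_eq_append, List.prod_append]
  simp

lemma oprod_succ_zero {n : ℕ} (g : Fin (n + 1) → 𝔸) :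
    oprod g = g 0 * oprod (fun k : Fin n => g k.succ) := by
  rw [oprod, List.ofFn_succ, List.prod_cons, oprod]

lemma exp_mul_eq_sum {i : 𝔸} (hi : i ^ 2 = -1) (σ : ℝ) (X : 𝔸) :
    NormedSpace.exp (-(σ • i)) * X
      = ∑ s : Fin 2, cPart i s X * NormedSpace.exp (-((-1 : ℝ) ^ (s : ℕ) • (σ • i))) := by
  rw [Fin.sum_univ_two, ← exp_step hi, ← exp_step hi, ← mul_add, cPart_add_cPart]

lemma exp_step' {i : 𝔸} (hi : i ^ 2 = -1) (σ : ℝ) (X : 𝔸) (s : Fin 2) :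
    NormedSpace.exp (-((-1 : ℝ) ^ (s : ℕ) • (σ • i))) * cPart i s X
      = cPart i s X * NormedSpace.exp (-(σ • i)) := by
  have h := exp_step hi ((-1 : ℝ) ^ (s : ℕ) * σ) X s
  have h1 : ((-1 : ℝ) ^ (s : ℕ) * σ) • i = (-1 : ℝ) ^ (s : ℕ) • (σ • i) := by
    rw [smul_smul]
  rw [h1] at h
  have h2 : (-1 : ℝ) ^ (s : ℕ) • ((-1 : ℝ) ^ (s : ℕ) • (σ • i)) = σ • i := by
    rw [smul_smul, ← pow_add, Even.neg_one_pow ⟨(s:ℕ), rfl⟩, one_smul]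
  rw [h2] at h
  exact h

lemma mul_exp_eq_sum {i : 𝔸} (hi : i ^ 2 = -1) (σ : ℝ) (X : 𝔸) :
    X * NormedSpace.exp (-(σ • i))
      = ∑ s : Fin 2, NormedSpace.exp (-((-1 : ℝ) ^ (s : ℕ) • (σ • i))) * cPart i s X := by
  rw [Fin.sum_univ_two, exp_step' hi, exp_step' hi, ← add_mul, cPart_add_cPart]

lemma prod_exp_mul {n : ℕ} (i : Fin n → 𝔸) (hi : ∀ k, i k ^ 2 = -1) (σ : Fin n → ℝ) (X : 𝔸) :
    oprod (fun k => NormedSpace.exp (-(σ k • i k))) * X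
      = ∑ m : Fin n → Fin 2,
          cBwd (List.ofFn (fun k => (i k, m k))) X *
            oprod (fun k => NormedSpace.exp (-((-1 : ℝ) ^ ((m k : ℕ)) • (σ k • i k)))) := by
  induction n generalizing X with
  | zero => simp [oprod, cBwd]
  | succ n ih =>
    refine Eq.trans ?_ (Fintype.sum_equiv (Fin.snocEquiv (fun _ => Fin 2)) _ _ (fun p => rfl))
    rw [Fintype.sum_prod_type]
    rw [oprod_succ_last, mul_assoc, exp_mul_eq_sum (hi _), Finset.mul_sum]
    refine Finset.sum_congr rfl fun s _ => ?_
    rw [← mul_assoc, ih (fun k => i k.castSucc) (fun k => hi _) (fun k => σ k.castSucc),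
      Finset.sum_mul]
    refine Finset.sum_congr rfl fun m' _ => ?_
    have hlist : List.ofFn (fun k : Fin (n+1) => (i k, Fin.snocEquiv (fun _ => Fin 2) (s, m') k))
        = List.ofFn (fun k : Fin n => (i k.castSucc, m' k)) ++ [(i (Fin.last n), s)] := by
      rw [List.ofFn_succ']
      simp [Fin.snocEquiv, List.concat_eq_append]
    rw [hlist, cBwd_concat]
    have hprod : oprod (fun k : Fin (n+1) => NormedSpace.exp
          (-((-1 : ℝ) ^ ((Fin.snocEquiv (fun _ => Fin 2) (s, m') k : ℕ)) • (σ k • i k))))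
        = oprod (fun k : Fin n => NormedSpace.exp
            (-((-1 : ℝ) ^ ((m' k : ℕ)) • (σ k.castSucc • i k.castSucc)))) *
          NormedSpace.exp (-((-1 : ℝ) ^ ((s : ℕ)) • (σ (Fin.last n) • i (Fin.last n)))) := by
      rw [oprod_succ_last]
      simp [Fin.snocEquiv]
    rw [hprod]
    simp only [mul_assoc]

lemma mul_prod_exp {n : ℕ} (i : Fin n → 𝔸) (hi : ∀ k, i k ^ 2 = -1) (σ : Fin n → ℝ) (X : 𝔸) :
    X * oprod (fun k => NormedSpace.exp (-(σ k • i k)))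
      = ∑ m : Fin n → Fin 2,
          oprod (fun k => NormedSpace.exp (-((-1 : ℝ) ^ ((m k : ℕ)) • (σ k • i k)))) *
            cFwd (List.ofFn (fun k => (i k, m k))) X := by
  induction n generalizing X with
  | zero => simp [oprod, cFwd]
  | succ n ih =>
    refine Eq.trans ?_ (Fintype.sum_equiv (Fin.consEquiv (fun _ => Fin 2)) _ _ (fun p => rfl))
    rw [Fintype.sum_prod_type]
    rw [oprod_succ_zero, ← mul_assoc, mul_exp_eq_sum (hi _), Finset.sum_mul]
    refine Finset.sum_congr rfl fun s _ => ?_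
    rw [mul_assoc, ih (fun k => i k.succ) (fun k => hi _) (fun k => σ k.succ),
      Finset.mul_sum]
    refine Finset.sum_congr rfl fun m' _ => ?_
    have hlist : List.ofFn (fun k : Fin (n+1) => (i k, Fin.consEquiv (fun _ => Fin 2) (s, m') k))
        = (i 0, s) :: List.ofFn (fun k : Fin n => (i k.succ, m' k)) := by
      rw [List.ofFn_succ]
      simp [Fin.consEquiv]
    rw [hlist, cFwd_cons]
    have hprod : oprod (fun k : Fin (n+1) => NormedSpace.exp
          (-((-1 : ℝ) ^ ((Fin.consEquiv (fun _ => Fin 2) (s, m') k : ℕ)) • (σ k • i k))))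
        = NormedSpace.exp (-((-1 : ℝ) ^ ((s : ℕ)) • (σ 0 • i 0))) *
          oprod (fun k : Fin n => NormedSpace.exp
            (-((-1 : ℝ) ^ ((m' k : ℕ)) • (σ k.succ • i k.succ)))) := by
      rw [oprod_succ_zero]
      simp [Fin.consEquiv]
    rw [hprod]
    simp only [mul_assoc]

lemma filter_finRange_eq_ofFn {d n : ℕ} (p : Fin d → Prop) [DecidablePred p]
    (e : Fin n → Fin d) (he : StrictMono e) (hm : ∀ x, p x ↔ ∃ k, e k = x) :
    (List.finRange d).filter (fun x => decide (p x)) = List.ofFn e := by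
  refine (fun hp h1 h2 => List.Perm.eq_of_sortedLE (List.Pairwise.sortedLE h1)
    (List.Pairwise.sortedLE h2) hp) ?_ ?_ ?_
  · rw [List.perm_ext_iff_of_nodup ((List.nodup_finRange d).filter _)
      (List.nodup_ofFn.mpr he.injective)]
    intro a
    simp only [List.mem_filter, List.mem_finRange, true_and, decide_eq_true_eq,
      List.mem_ofFn, Set.mem_range, hm]
  · exact ((List.pairwise_lt_finRange d).sublist List.filter_sublist).imp le_of_lt
  · exact (List.pairwise_ofFn.mpr (fun a b h => he h)).imp le_of_lt

lemma filter_lt_map {α : Type*} {d : ℕ} (l : Fin d) (f : Fin d → α) :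
    ((List.finRange d).filter (fun k => k < l)).map f
      = List.ofFn (fun k : Fin l.val => f (Fin.castLE l.isLt.le k)) := by
  have hm : ∀ x : Fin d, x < l ↔ ∃ k : Fin l.val, Fin.castLE l.isLt.le k = x := by
    intro x
    constructor
    · intro h
      exact ⟨⟨x.val, h⟩, rfl⟩
    · rintro ⟨k, rfl⟩
      exact k.isLt
  rw [filter_finRange_eq_ofFn (fun k => k < l) (fun k : Fin l.val => Fin.castLE l.isLt.le k)
      (fun a b h => h) hm, List.map_ofFn]
  rfl

lemma filter_gt_map {α : Type*} {d : ℕ} (l : Fin d) (f : Fin d → α) :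
    ((List.finRange d).filter (fun k => l < k)).map f
      = List.ofFn (fun k : Fin (d - (l.val + 1)) => f ⟨l.val + 1 + k.val, by omega⟩) := by
  have hm : ∀ x : Fin d, l < x ↔
      ∃ k : Fin (d - (l.val + 1)), (⟨l.val + 1 + k.val, by omega⟩ : Fin d) = x := by
    intro x
    constructor
    · intro h
      have hx : l.val + 1 ≤ x.val := h
      refine ⟨⟨x.val - (l.val + 1), by omega⟩, ?_⟩
      ext
      show l.val + 1 + (x.val - (l.val + 1)) = x.val
      omega
    · rintro ⟨k, rfl⟩
      show l.val < l.val + 1 + k.val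
      omega
  have hmono : StrictMono (fun k : Fin (d - (l.val + 1)) =>
      (⟨l.val + 1 + k.val, by omega⟩ : Fin d)) := by
    intro a b h
    simp only [Fin.lt_def] at h ⊢
    omega
  rw [filter_finRange_eq_ofFn (fun k => l < k) _ hmono hm, List.map_ofFn]
  rfl

def colSgn (z : ZMod 2) : ℝ := (-1 : ℝ) ^ z.val

lemma colSgn_add (x y : ZMod 2) : colSgn (x + y) = colSgn x * colSgn y := by
  have h : (x + y).val = (x.val + y.val) % 2 := ZMod.val_add x y
  rw [colSgn, colSgn, colSgn, h, ← neg_one_pow_eq_pow_mod_two, pow_add]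

lemma colSgn_zero : colSgn 0 = 1 := by
  have v0 : ZMod.val (0 : ZMod 2) = 0 := by decide
  simp [colSgn, v0]

lemma colSgn_fin (s : Fin 2) : colSgn ((s : ℕ) : ZMod 2) = (-1 : ℝ) ^ (s : ℕ) := by
  have v0 : ZMod.val (0 : ZMod 2) = 0 := by decide
  have v1 : ZMod.val (1 : ZMod 2) = 1 := by decide
  fin_cases s <;> simp [colSgn, v0, v1]

def asm1 {n : ℕ} (J' : Fin n → Fin n → Fin 2) (m : Fin n → Fin 2) :
    Fin (n + 1) → Fin (n + 1) → Fin 2 :=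
  Fin.snoc (fun l => Fin.snoc (J' l) 0) (Fin.snoc m 0)

@[simp] lemma asm1_cc {n : ℕ} (J' : Fin n → Fin n → Fin 2) (m : Fin n → Fin 2)
    (l k : Fin n) : asm1 J' m l.castSucc k.castSucc = J' l k := by
  simp [asm1]

@[simp] lemma asm1_cl {n : ℕ} (J' : Fin n → Fin n → Fin 2) (m : Fin n → Fin 2)
    (l : Fin n) : asm1 J' m l.castSucc (Fin.last n) = 0 := by
  simp [asm1]

@[simp] lemma asm1_lc {n : ℕ} (J' : Fin n → Fin n → Fin 2) (m : Fin n → Fin 2)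
    (k : Fin n) : asm1 J' m (Fin.last n) k.castSucc = m k := by
  simp [asm1]

@[simp] lemma asm1_ll {n : ℕ} (J' : Fin n → Fin n → Fin 2) (m : Fin n → Fin 2) :
    asm1 J' m (Fin.last n) (Fin.last n) = 0 := by
  simp [asm1]

lemma sum_tri1 {M : Type*} [AddCommMonoid M] {n : ℕ}
    (f : (Fin (n + 1) → Fin (n + 1) → Fin 2) → M) :
    ∑ J ∈ Finset.univ.filter
        (fun J : Fin (n + 1) → Fin (n + 1) → Fin 2 => ∀ l k, l ≤ k → J l k = 0), f J
      = ∑ J' ∈ Finset.univ.filter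
          (fun J' : Fin n → Fin n → Fin 2 => ∀ l k, l ≤ k → J' l k = 0),
          ∑ m : Fin n → Fin 2, f (asm1 J' m) := by
  rw [← Finset.sum_product']
  have hleft : ∀ J : Fin (n + 1) → Fin (n + 1) → Fin 2, (∀ l k, l ≤ k → J l k = 0) →
      asm1 (fun l k => J l.castSucc k.castSucc) (fun k => J (Fin.last n) k.castSucc) = J := by
    intro J hJ
    funext l k
    refine Fin.lastCases ?_ (fun l' => ?_) l <;> refine Fin.lastCases ?_ (fun k' => ?_) k
    · rw [asm1_ll, hJ _ _ le_rfl]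
    · rw [asm1_lc]
    · rw [asm1_cl, hJ _ _ (Fin.le_last _)]
    · rw [asm1_cc]
  refine Finset.sum_nbij'
    (i := fun J => ((fun l k => J l.castSucc k.castSucc), (fun k => J (Fin.last n) k.castSucc)))
    (j := fun p => asm1 p.1 p.2) ?_ ?_ ?_ ?_ ?_
  · intro J hJ
    rw [Finset.mem_filter] at hJ
    rw [Finset.mem_product, Finset.mem_filter]
    exact ⟨⟨Finset.mem_univ _, fun l k h => hJ.2 _ _ (Fin.castSucc_le_castSucc_iff.mpr h)⟩,
      Finset.mem_univ _⟩
  · rintro ⟨J', m⟩ hp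
    rw [Finset.mem_product, Finset.mem_filter] at hp
    rw [Finset.mem_filter]
    refine ⟨Finset.mem_univ _, fun l k => ?_⟩
    refine Fin.lastCases ?_ (fun l' => ?_) l <;> refine Fin.lastCases ?_ (fun k' => ?_) k <;>
      intro hlk
    · simp only [asm1_ll]
    · exact absurd hlk (Fin.castSucc_lt_last k').not_ge
    · simp only [asm1_cl]
    · simp only [asm1_cc]
      exact hp.1.2 _ _ (Fin.castSucc_le_castSucc_iff.mp hlk)
  · intro J hJ
    rw [Finset.mem_filter] at hJ
    exact hleft J hJ.2
  · rintro ⟨J', m⟩ hp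
    simp only [Prod.mk.injEq]
    constructor
    · funext l k; simp only [asm1_cc]
    · funext k; simp only [asm1_lc]
  · intro J hJ
    rw [Finset.mem_filter] at hJ
    exact (congrArg f (hleft J hJ.2)).symm

def asm2 {n : ℕ} (J' : Fin n → Fin n → Fin 2) (m : Fin n → Fin 2) :
    Fin (n + 1) → Fin (n + 1) → Fin 2 :=
  Fin.cons (Fin.cons 0 m) (fun l => Fin.cons 0 (J' l))

@[simp] lemma asm2_ss {n : ℕ} (J' : Fin n → Fin n → Fin 2) (m : Fin n → Fin 2)
    (l k : Fin n) : asm2 J' m l.succ k.succ = J' l k := by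
  simp [asm2]

@[simp] lemma asm2_s0 {n : ℕ} (J' : Fin n → Fin n → Fin 2) (m : Fin n → Fin 2)
    (l : Fin n) : asm2 J' m l.succ 0 = 0 := by
  simp [asm2]

@[simp] lemma asm2_0s {n : ℕ} (J' : Fin n → Fin n → Fin 2) (m : Fin n → Fin 2)
    (k : Fin n) : asm2 J' m 0 k.succ = m k := by
  simp [asm2]

@[simp] lemma asm2_00 {n : ℕ} (J' : Fin n → Fin n → Fin 2) (m : Fin n → Fin 2) :
    asm2 J' m 0 0 = 0 := by
  simp [asm2]

lemma sum_tri2 {M : Type*} [AddCommMonoid M] {n : ℕ}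
    (f : (Fin (n + 1) → Fin (n + 1) → Fin 2) → M) :
    ∑ J ∈ Finset.univ.filter
        (fun J : Fin (n + 1) → Fin (n + 1) → Fin 2 => ∀ l k, k ≤ l → J l k = 0), f J
      = ∑ J' ∈ Finset.univ.filter
          (fun J' : Fin n → Fin n → Fin 2 => ∀ l k, k ≤ l → J' l k = 0),
          ∑ m : Fin n → Fin 2, f (asm2 J' m) := by
  rw [← Finset.sum_product']
  have hleft : ∀ J : Fin (n + 1) → Fin (n + 1) → Fin 2, (∀ l k, k ≤ l → J l k = 0) →
      asm2 (fun l k => J l.succ k.succ) (fun k => J 0 k.succ) = J := by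
    intro J hJ
    funext l k
    refine Fin.cases ?_ (fun l' => ?_) l <;> refine Fin.cases ?_ (fun k' => ?_) k
    · rw [asm2_00, hJ _ _ le_rfl]
    · rw [asm2_0s]
    · rw [asm2_s0, hJ _ _ (Fin.zero_le _)]
    · rw [asm2_ss]
  refine Finset.sum_nbij'
    (i := fun J => ((fun l k => J l.succ k.succ), (fun k => J 0 k.succ)))
    (j := fun p => asm2 p.1 p.2) ?_ ?_ ?_ ?_ ?_
  · intro J hJ
    rw [Finset.mem_filter] at hJ
    rw [Finset.mem_product, Finset.mem_filter]
    exact ⟨⟨Finset.mem_univ _, fun l k h => hJ.2 _ _ (Fin.succ_le_succ_iff.mpr h)⟩,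
      Finset.mem_univ _⟩
  · rintro ⟨J', m⟩ hp
    rw [Finset.mem_product, Finset.mem_filter] at hp
    rw [Finset.mem_filter]
    refine ⟨Finset.mem_univ _, fun l k => ?_⟩
    refine Fin.cases ?_ (fun l' => ?_) l <;> refine Fin.cases ?_ (fun k' => ?_) k <;>
      intro hkl
    · simp only [asm2_00]
    · exact absurd hkl (Fin.succ_pos k').not_ge
    · simp only [asm2_s0]
    · simp only [asm2_ss]
      exact hp.1.2 _ _ (Fin.succ_le_succ_iff.mp hkl)
  · intro J hJ
    rw [Finset.mem_filter] at hJ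
    exact hleft J hJ.2
  · rintro ⟨J', m⟩ hp
    simp only [Prod.mk.injEq]
    constructor
    · funext l k; simp only [asm2_ss]
    · funext k; simp only [asm2_0s]
  · intro J hJ
    rw [Finset.mem_filter] at hJ
    exact (congrArg f (hleft J hJ.2)).symm

lemma collapse {M : Type*} [AddCommMonoid M] {d : ℕ}
    (P : (Fin d → Fin d → Fin 2) → Prop) [DecidablePred P]
    (f : (Fin d → Fin d → Fin 2) → M) :
    (∑ j : Fin d → Fin 2, ∑ J ∈ Finset.univ.filter
        (fun J : Fin d → Fin d → Fin 2 =>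
          P J ∧ ∀ c, (∑ l, ((J l c : ℕ) : ZMod 2)) = ((j c : ℕ) : ZMod 2)), f J)
      = ∑ J ∈ Finset.univ.filter P, f J := by
  have hdec : ∀ (z : ZMod 2) (s : Fin 2),
      (z = ((s : ℕ) : ZMod 2)) ↔ ((if z = 0 then (0 : Fin 2) else 1) = s) := by decide
  have key : ∀ j : Fin d → Fin 2, Finset.univ.filter
        (fun J : Fin d → Fin d → Fin 2 =>
          P J ∧ ∀ c, (∑ l, ((J l c : ℕ) : ZMod 2)) = ((j c : ℕ) : ZMod 2))
      = (Finset.univ.filter P).filter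
          (fun J => (fun c => if (∑ l, ((J l c : ℕ) : ZMod 2)) = 0 then (0 : Fin 2) else 1) = j) := by
    intro j
    ext J
    simp only [Finset.mem_filter, Finset.mem_univ, true_and, funext_iff]
    constructor
    · rintro ⟨hP, hc⟩
      exact ⟨hP, fun c => (hdec _ _).mp (hc c)⟩
    · rintro ⟨hP, hc⟩
      exact ⟨hP, fun c => (hdec _ _).mpr (hc c)⟩
  calc (∑ j : Fin d → Fin 2, ∑ J ∈ Finset.univ.filter
        (fun J : Fin d → Fin d → Fin 2 =>
          P J ∧ ∀ c, (∑ l, ((J l c : ℕ) : ZMod 2)) = ((j c : ℕ) : ZMod 2)), f J)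
      = ∑ j : Fin d → Fin 2, ∑ J ∈ (Finset.univ.filter P).filter
          (fun J => (fun c => if (∑ l, ((J l c : ℕ) : ZMod 2)) = 0 then (0 : Fin 2) else 1) = j),
            f J := by
        exact Finset.sum_congr rfl fun j _ => by rw [key j]
    _ = ∑ J ∈ Finset.univ.filter P, f J := Finset.sum_fiberwise _ _ _

lemma main1 {d : ℕ} (i : Fin d → 𝔸) (hi : ∀ l, i l ^ 2 = -1) (ρ σ : Fin d → ℝ) :
    oprod (fun l => NormedSpace.exp (-(ρ l • i l)) * NormedSpace.exp (-(σ l • i l)))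
      = ∑ J ∈ Finset.univ.filter
          (fun J : Fin d → Fin d → Fin 2 => ∀ l k : Fin d, l ≤ k → J l k = 0),
          oprod (fun l => cBwd (List.ofFn (fun k : Fin l.val =>
              (i (Fin.castLE l.isLt.le k), J l (Fin.castLE l.isLt.le k))))
            (NormedSpace.exp (-(ρ l • i l)))) *
          oprod (fun l => NormedSpace.exp
            (-(colSgn (∑ r, ((J r l : ℕ) : ZMod 2)) • (σ l • i l)))) := by
  induction d with
  | zero =>
    rw [Finset.filter_true_of_mem (fun J _ => fun l => l.elim0)]
    simp [oprod]
  | succ n ih =>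
    rw [sum_tri1, oprod_succ_last,
      ih (fun l => i l.castSucc) (fun l => hi _) (fun l => ρ l.castSucc) (fun l => σ l.castSucc),
      Finset.sum_mul]
    refine Finset.sum_congr rfl fun J' hJ' => ?_
    set D := Fin.last n
    set τ : Fin n → ℝ := fun k => colSgn (∑ r, ((J' r k : ℕ) : ZMod 2)) * σ k.castSucc with hτ
    have hGτ : (fun k : Fin n => NormedSpace.exp
          (-(colSgn (∑ r, ((J' r k : ℕ) : ZMod 2)) • (σ k.castSucc • i k.castSucc))))
        = fun k => NormedSpace.exp (-(τ k • i k.castSucc)) := by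
      funext k
      rw [hτ, smul_smul]
    rw [hGτ, mul_assoc, ← mul_assoc (oprod fun k => NormedSpace.exp (-(τ k • i k.castSucc))),
      prod_exp_mul (fun k => i k.castSucc) (fun k => hi _) τ
        (NormedSpace.exp (-(ρ D • i D))),
      Finset.sum_mul, Finset.mul_sum]
    refine Finset.sum_congr rfl fun m _ => ?_
    -- RHS: term at (asm1 J' m); split both oprods at last
    rw [oprod_succ_last (fun l : Fin (n+1) => cBwd _ _), oprod_succ_last (fun l : Fin (n+1) =>
      NormedSpace.exp (-(colSgn (∑ r, ((asm1 J' m r l : ℕ) : ZMod 2)) • (σ l • i l))))]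
    -- rows of asm1: castSucc rows
    have hrow : (fun l : Fin n => cBwd (List.ofFn (fun k : Fin (l.castSucc).val =>
          (i (Fin.castLE (l.castSucc).isLt.le k), asm1 J' m l.castSucc (Fin.castLE (l.castSucc).isLt.le k))))
          (NormedSpace.exp (-(ρ l.castSucc • i l.castSucc))))
        = fun l : Fin n => cBwd (List.ofFn (fun k : Fin l.val =>
            (i (Fin.castLE l.isLt.le k).castSucc, J' l (Fin.castLE l.isLt.le k))))
          (NormedSpace.exp (-(ρ l.castSucc • i l.castSucc))) := by
      funext l
      congr 1
      apply congrArg List.ofFn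
      funext k
      show (i (Fin.castLE l.isLt.le k).castSucc,
        asm1 J' m l.castSucc (Fin.castLE l.isLt.le k).castSucc) = _
      rw [asm1_cc]
    have hlastrow : List.ofFn (fun k : Fin D.val =>
          (i (Fin.castLE D.isLt.le k), asm1 J' m D (Fin.castLE D.isLt.le k)))
        = List.ofFn (fun k : Fin n => (i k.castSucc, m k)) := by
      apply congrArg List.ofFn
      funext k
      show (i k.castSucc, asm1 J' m D k.castSucc) = _
      rw [asm1_lc]
    -- columns of asm1
    have hcolc : ∀ c : Fin n, (∑ r : Fin (n+1), ((asm1 J' m r c.castSucc : ℕ) : ZMod 2))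
        = (∑ r : Fin n, ((J' r c : ℕ) : ZMod 2)) + ((m c : ℕ) : ZMod 2) := by
      intro c
      rw [Fin.sum_univ_castSucc]
      congr 1
      · exact Finset.sum_congr rfl fun r _ => by rw [asm1_cc]
      · rw [asm1_lc]
    have hcoll : (∑ r : Fin (n+1), ((asm1 J' m r D : ℕ) : ZMod 2)) = 0 := by
      rw [Fin.sum_univ_castSucc]
      rw [Finset.sum_eq_zero (fun r _ => by rw [asm1_cl]; rfl), asm1_ll]
      simp
    have hcols : (fun c : Fin n => NormedSpace.exp
          (-(colSgn (∑ r : Fin (n+1), ((asm1 J' m r c.castSucc : ℕ) : ZMod 2))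
            • (σ c.castSucc • i c.castSucc))))
        = fun c : Fin n => NormedSpace.exp
            (-((-1 : ℝ) ^ ((m c : ℕ)) • (τ c • i c.castSucc))) := by
      funext c
      rw [hcolc c, colSgn_add, colSgn_fin, hτ]
      congr 2
      rw [smul_smul, smul_smul]
      ring_nf
    rw [hrow, hlastrow, hcols, hcoll, colSgn_zero, one_smul]
    simp only [mul_assoc]
    rfl

lemma ofFn_congr' {α : Type*} {m n : ℕ} (h : m = n) (f : Fin m → α) (g : Fin n → α)
    (hfg : ∀ k : Fin n, f (Fin.cast h.symm k) = g k) : List.ofFn f = List.ofFn g := by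
  subst h
  exact congrArg _ (funext fun k => hfg k)

lemma main2 {d : ℕ} (i : Fin d → 𝔸) (hi : ∀ l, i l ^ 2 = -1) (ρ σ : Fin d → ℝ) :
    oprod (fun l => NormedSpace.exp (-(ρ l • i l)) * NormedSpace.exp (-(σ l • i l)))
      = ∑ J ∈ Finset.univ.filter
          (fun J : Fin d → Fin d → Fin 2 => ∀ l k : Fin d, k ≤ l → J l k = 0),
          oprod (fun l => NormedSpace.exp
            (-(colSgn (∑ r, ((J r l : ℕ) : ZMod 2)) • (ρ l • i l)))) *
          oprod (fun l => cFwd (List.ofFn (fun k : Fin (d - (l.val + 1)) =>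
              (i ⟨l.val + 1 + k.val, by omega⟩, J l ⟨l.val + 1 + k.val, by omega⟩)))
            (NormedSpace.exp (-(σ l • i l)))) := by
  induction d with
  | zero =>
    rw [Finset.filter_true_of_mem (fun J _ => fun l => l.elim0)]
    simp [oprod]
  | succ n ih =>
    rw [sum_tri2, oprod_succ_zero,
      ih (fun l => i l.succ) (fun l => hi _) (fun l => ρ l.succ) (fun l => σ l.succ),
      Finset.mul_sum]
    refine Finset.sum_congr rfl fun J' hJ' => ?_
    set τ : Fin n → ℝ := fun k => colSgn (∑ r, ((J' r k : ℕ) : ZMod 2)) * ρ k.succ with hτ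
    have hGτ : (fun k : Fin n => NormedSpace.exp
          (-(colSgn (∑ r, ((J' r k : ℕ) : ZMod 2)) • (ρ k.succ • i k.succ))))
        = fun k => NormedSpace.exp (-(τ k • i k.succ)) := by
      funext k
      rw [hτ, smul_smul]
    rw [hGτ, mul_assoc, ← mul_assoc (NormedSpace.exp (-(σ (0 : Fin (n+1)) • i 0))),
      mul_prod_exp (fun k => i k.succ) (fun k => hi _) τ
        (NormedSpace.exp (-(σ (0 : Fin (n+1)) • i 0))),
      Finset.sum_mul, Finset.mul_sum]
    refine Finset.sum_congr rfl fun m _ => ?_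
    rw [oprod_succ_zero (fun l : Fin (n+1) =>
        NormedSpace.exp (-(colSgn (∑ r, ((asm2 J' m r l : ℕ) : ZMod 2)) • (ρ l • i l)))),
      oprod_succ_zero (fun l : Fin (n+1) => cFwd _ _)]
    -- column 0 of asm2 is zero
    have hcol0 : (∑ r : Fin (n+1), ((asm2 J' m r (0 : Fin (n+1)) : ℕ) : ZMod 2)) = 0 := by
      rw [Fin.sum_univ_succ]
      rw [asm2_00, Finset.sum_eq_zero (fun r _ => by rw [asm2_s0]; rfl)]
      simp
    have hcols : ∀ c : Fin n, (∑ r : Fin (n+1), ((asm2 J' m r c.succ : ℕ) : ZMod 2))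
        = ((m c : ℕ) : ZMod 2) + (∑ r : Fin n, ((J' r c : ℕ) : ZMod 2)) := by
      intro c
      rw [Fin.sum_univ_succ, asm2_0s]
      exact congrArg _ (Finset.sum_congr rfl fun r _ => by rw [asm2_ss])
    have hGs : (fun c : Fin n => NormedSpace.exp
          (-(colSgn (∑ r : Fin (n+1), ((asm2 J' m r c.succ : ℕ) : ZMod 2))
            • (ρ c.succ • i c.succ))))
        = fun c : Fin n => NormedSpace.exp
            (-((-1 : ℝ) ^ ((m c : ℕ)) • (τ c • i c.succ))) := by
      funext c
      rw [hcols c, colSgn_add, colSgn_fin, hτ]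
      congr 2
      rw [smul_smul, smul_smul]
      ring_nf
    -- row 0 of asm2
    have hpair0 : ∀ (x : Fin (n+1)) (y : Fin n), x = y.succ →
        (i x, asm2 J' m 0 x) = (i y.succ, m y) := by
      rintro x y rfl
      rw [asm2_0s]
    have hrow0 : List.ofFn (fun k : Fin (n + 1 - (((0 : Fin (n+1))).val + 1)) =>
          (i ⟨((0 : Fin (n+1))).val + 1 + k.val, by omega⟩,
           asm2 J' m 0 ⟨((0 : Fin (n+1))).val + 1 + k.val, by omega⟩))
        = List.ofFn (fun k : Fin n => (i k.succ, m k)) := by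
      have hv0 : ((0 : Fin (n+1))).val = 0 := rfl
      refine ofFn_congr' (by omega) _ _ fun k => ?_
      refine hpair0 _ k ?_
      ext
      simp only [hv0, Fin.coe_cast, Fin.val_succ]
      omega
    have hpairS : ∀ (l : Fin n) (x : Fin (n+1)) (y : Fin n), x = y.succ →
        (i x, asm2 J' m l.succ x) = (i y.succ, J' l y) := by
      rintro l x y rfl
      rw [asm2_ss]
    have hrows : (fun l : Fin n => cFwd (List.ofFn (fun k : Fin (n + 1 - (((l.succ : Fin (n+1))).val + 1)) =>
          (i ⟨((l.succ : Fin (n+1))).val + 1 + k.val, by omega⟩,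
           asm2 J' m l.succ ⟨((l.succ : Fin (n+1))).val + 1 + k.val, by omega⟩)))
          (NormedSpace.exp (-(σ l.succ • i l.succ))))
        = fun l : Fin n => cFwd (List.ofFn (fun k : Fin (n - (l.val + 1)) =>
            (i (⟨l.val + 1 + k.val, by omega⟩ : Fin n).succ, J' l ⟨l.val + 1 + k.val, by omega⟩)))
          (NormedSpace.exp (-(σ l.succ • i l.succ))) := by
      funext l
      congr 1
      refine ofFn_congr' (by rw [Fin.val_succ]; omega) _ _ fun k => ?_
      refine hpairS l _ ⟨l.val + 1 + k.val, by omega⟩ ?_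
      ext
      simp only [Fin.coe_cast, Fin.val_succ]
      omega
    rw [hrow0, hGs, hcol0, colSgn_zero, one_smul, hrows]
    simp only [mul_assoc]

theorem prod_exp_add_split'
    {d : ℕ} (i : Fin d → 𝔸) (hi : ∀ l, i l ^ 2 = -1)
    (ρ σ : Fin d → ℝ) :
    (oprod (fun l => NormedSpace.exp (-(ρ l • i l + σ l • i l))) =
      ∑ j : Fin d → Fin 2,
        ∑ J ∈ Finset.univ.filter
            (fun J : Fin d → Fin d → Fin 2 =>
              (∀ l k : Fin d, l ≤ k → J l k = 0) ∧
              (∀ c : Fin d, (∑ l, ((J l c : ℕ) : ZMod 2)) = ((j c : ℕ) : ZMod 2))),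
          oprod (fun l =>
              cBwd (((List.finRange d).filter (fun k => k < l)).map (fun k => (i k, J l k)))
                (NormedSpace.exp (-(ρ l • i l)))) *
            oprod (fun l =>
              NormedSpace.exp (-((-1 : ℝ) ^ ((j l : ℕ)) • (σ l • i l))))) ∧
    (oprod (fun l => NormedSpace.exp (-(ρ l • i l + σ l • i l))) =
      ∑ j : Fin d → Fin 2,
        ∑ J ∈ Finset.univ.filter
            (fun J : Fin d → Fin d → Fin 2 =>
              (∀ l k : Fin d, k ≤ l → J l k = 0) ∧
              (∀ c : Fin d, (∑ l, ((J l c : ℕ) : ZMod 2)) = ((j c : ℕ) : ZMod 2))),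
          oprod (fun l =>
              NormedSpace.exp (-((-1 : ℝ) ^ ((j l : ℕ)) • (ρ l • i l)))) *
            oprod (fun l =>
              cFwd (((List.finRange d).filter (fun k => l < k)).map (fun k => (i k, J l k)))
                (NormedSpace.exp (-(σ l • i l))))) := by
  have hsplit : oprod (fun l => NormedSpace.exp (-(ρ l • i l + σ l • i l)))
      = oprod (fun l =>
          NormedSpace.exp (-(ρ l • i l)) * NormedSpace.exp (-(σ l • i l))) := by
    refine congrArg oprod (funext fun l => ?_)
    rw [neg_add, NormedSpace.exp_add_of_commute_of_mem_ball (𝕂 := ℝ)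
      ((((Commute.refl (i l)).smul_left (ρ l)).smul_right (σ l)).neg_left.neg_right)
      ((NormedSpace.expSeries_radius_eq_top ℝ 𝔸).symm ▸ edist_lt_top _ _)
      ((NormedSpace.expSeries_radius_eq_top ℝ 𝔸).symm ▸ edist_lt_top _ _)]
  constructor
  · calc oprod (fun l => NormedSpace.exp (-(ρ l • i l + σ l • i l)))
        = oprod (fun l =>
            NormedSpace.exp (-(ρ l • i l)) * NormedSpace.exp (-(σ l • i l))) := hsplit
      _ = ∑ J ∈ Finset.univ.filter
            (fun J : Fin d → Fin d → Fin 2 => ∀ l k : Fin d, l ≤ k → J l k = 0),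
            oprod (fun l => cBwd (List.ofFn (fun k : Fin l.val =>
                (i (Fin.castLE l.isLt.le k), J l (Fin.castLE l.isLt.le k))))
              (NormedSpace.exp (-(ρ l • i l)))) *
            oprod (fun l => NormedSpace.exp
              (-(colSgn (∑ r, ((J r l : ℕ) : ZMod 2)) • (σ l • i l)))) := main1 i hi ρ σ
      _ = ∑ j : Fin d → Fin 2, ∑ J ∈ Finset.univ.filter
            (fun J : Fin d → Fin d → Fin 2 =>
              (∀ l k : Fin d, l ≤ k → J l k = 0) ∧
              (∀ c : Fin d, (∑ l, ((J l c : ℕ) : ZMod 2)) = ((j c : ℕ) : ZMod 2))),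
            oprod (fun l => cBwd (List.ofFn (fun k : Fin l.val =>
                (i (Fin.castLE l.isLt.le k), J l (Fin.castLE l.isLt.le k))))
              (NormedSpace.exp (-(ρ l • i l)))) *
            oprod (fun l => NormedSpace.exp
              (-(colSgn (∑ r, ((J r l : ℕ) : ZMod 2)) • (σ l • i l)))) :=
        (collapse (fun J : Fin d → Fin d → Fin 2 => ∀ l k : Fin d, l ≤ k → J l k = 0) _).symm
      _ = _ := by
        refine Finset.sum_congr rfl fun j _ => ?_
        refine Finset.sum_congr (by ext J; simp only [Finset.mem_filter]) fun J hJ => ?_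
        obtain ⟨-, htri, hpar⟩ := Finset.mem_filter.mp hJ
        congr 1
        · exact congrArg oprod (funext fun l => by rw [filter_lt_map])
        · refine congrArg oprod (funext fun l => ?_)
          rw [hpar l, colSgn_fin]
  · calc oprod (fun l => NormedSpace.exp (-(ρ l • i l + σ l • i l)))
        = oprod (fun l =>
            NormedSpace.exp (-(ρ l • i l)) * NormedSpace.exp (-(σ l • i l))) := hsplit
      _ = ∑ J ∈ Finset.univ.filter
            (fun J : Fin d → Fin d → Fin 2 => ∀ l k : Fin d, k ≤ l → J l k = 0),
            oprod (fun l => NormedSpace.exp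
              (-(colSgn (∑ r, ((J r l : ℕ) : ZMod 2)) • (ρ l • i l)))) *
            oprod (fun l => cFwd (List.ofFn (fun k : Fin (d - (l.val + 1)) =>
                (i ⟨l.val + 1 + k.val, by omega⟩, J l ⟨l.val + 1 + k.val, by omega⟩)))
              (NormedSpace.exp (-(σ l • i l)))) := main2 i hi ρ σ
      _ = ∑ j : Fin d → Fin 2, ∑ J ∈ Finset.univ.filter
            (fun J : Fin d → Fin d → Fin 2 =>
              (∀ l k : Fin d, k ≤ l → J l k = 0) ∧
              (∀ c : Fin d, (∑ l, ((J l c : ℕ) : ZMod 2)) = ((j c : ℕ) : ZMod 2))),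
            oprod (fun l => NormedSpace.exp
              (-(colSgn (∑ r, ((J r l : ℕ) : ZMod 2)) • (ρ l • i l)))) *
            oprod (fun l => cFwd (List.ofFn (fun k : Fin (d - (l.val + 1)) =>
                (i ⟨l.val + 1 + k.val, by omega⟩, J l ⟨l.val + 1 + k.val, by omega⟩)))
              (NormedSpace.exp (-(σ l • i l)))) :=
        (collapse (fun J : Fin d → Fin d → Fin 2 => ∀ l k : Fin d, k ≤ l → J l k = 0) _).symm
      _ = _ := by
        refine Finset.sum_congr rfl fun j _ => ?_
        refine Finset.sum_congr (by ext J; simp only [Finset.mem_filter]) fun J hJ => ?_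
        obtain ⟨-, htri, hpar⟩ := Finset.mem_filter.mp hJ
        congr 1
        · refine congrArg oprod (funext fun l => ?_)
          rw [hpar l, colSgn_fin]
        · exact congrArg oprod (funext fun l => by rw [filter_gt_map])

end Aux

/-- Splitting a product of exponentials of sums `exp(−(a_l+b_l))`, `a_l = ρ_l i_l`,
`b_l = σ_l i_l`, `i_l² = −1`, into parts depending only on the `a`'s and only on the `b`'s,
via strictly lower (resp. upper) triangular sign-bookkeeping matrices. -/
theorem prod_exp_add_split [NormedRing 𝔸] [NormedAlgebra ℝ 𝔸] [CompleteSpace 𝔸]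
    {d : ℕ} (i : Fin d → 𝔸) (hi : ∀ l, i l ^ 2 = -1)
    (ρ σ : Fin d → ℝ) :
    (oprod (fun l => NormedSpace.exp (-(ρ l • i l + σ l • i l))) =
      ∑ j : Fin d → Fin 2,
        ∑ J ∈ Finset.univ.filter
            (fun J : Fin d → Fin d → Fin 2 =>
              (∀ l k : Fin d, l ≤ k → J l k = 0) ∧
              (∀ c : Fin d, (∑ l, ((J l c : ℕ) : ZMod 2)) = ((j c : ℕ) : ZMod 2))),
          oprod (fun l =>
              cBwd (((List.finRange d).filter (fun k => k < l)).map (fun k => (i k, J l k)))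
                (NormedSpace.exp (-(ρ l • i l)))) *
            oprod (fun l =>
              NormedSpace.exp (-((-1 : ℝ) ^ ((j l : ℕ)) • (σ l • i l))))) ∧
    (oprod (fun l => NormedSpace.exp (-(ρ l • i l + σ l • i l))) =
      ∑ j : Fin d → Fin 2,
        ∑ J ∈ Finset.univ.filter
            (fun J : Fin d → Fin d → Fin 2 =>
              (∀ l k : Fin d, k ≤ l → J l k = 0) ∧
              (∀ c : Fin d, (∑ l, ((J l c : ℕ) : ZMod 2)) = ((j c : ℕ) : ZMod 2))),
          oprod (fun l =>
              NormedSpace.exp (-((-1 : ℝ) ^ ((j l : ℕ)) • (ρ l • i l)))) *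
            oprod (fun l =>
              cFwd (((List.finRange d).filter (fun k => l < k)).map (fun k => (i k, J l k)))
                (NormedSpace.exp (-(σ l • i l))))) := by
  exact prod_exp_add_split' i hi ρ σ
end
end
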